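/- Let T be an integer, let 1 ≤ s < r < e ≤ T be integers, and let f ∈ ℝ^T be continuous piecewise-linear on [s,e] with exactly one change-point (kink) at r, with kink magnitude Δ. Set η = min{r − s, e − r}. Then C^r_{s,e}(f) = max over integers b with s < b < e of C^b_{s,e}(f), and (1/√24)·η^{3/2}·Δ ≤ C^r_{s,e}(f) ≤ (1/√3)·(η+1)^{3/2}·Δ. -/

import Mathlib

open Real Finset

/-- Normalizing constant `α^b_{s,e}` of the linear contrast vector. -/
noncomputable def alphaC (s b e : ℕ) : ℝ :=
  Real.sqrt (6 / (((e : ℝ) - s + 1) * (((e : ℝ) - s + 1) ^ 2 - 1) *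
    (1 + ((e : ℝ) - b + 1) * ((b : ℝ) - s + 1) + ((e : ℝ) - b) * ((b : ℝ) - s))))

/-- Normalizing constant `β^b_{s,e}` of the linear contrast vector. -/
noncomputable def betaC (s b e : ℕ) : ℝ :=
  Real.sqrt ((((e : ℝ) - b + 1) * ((e : ℝ) - b)) / (((b : ℝ) - s + 1) * ((b : ℝ) - s)))

/-- The linear contrast vector `ϕ^b_{s,e}`, given coordinatewise as a function of `t`. -/
noncomputable def phiC (s b e t : ℕ) : ℝ :=
  if s ≤ t ∧ t ≤ b then
    alphaC s b e * betaC s b e *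
      (((e : ℝ) + 2 * b - 3 * s + 2) * t - ((b : ℝ) * e + (b : ℝ) * s - 2 * (s : ℝ) ^ 2 + 2 * s))
  else if b + 1 ≤ t ∧ t ≤ e then
    -(alphaC s b e / betaC s b e) *
      ((3 * (e : ℝ) - 2 * b - s + 2) * t - (2 * (e : ℝ) ^ 2 + 2 * e - (b : ℝ) * e - (b : ℝ) * s))
  else 0

/-- Euclidean inner product on `ℝ^T`, with coordinates indexed by `1, …, T`. -/
noncomputable def innerT (T : ℕ) (x y : ℕ → ℝ) : ℝ := ∑ t ∈ Finset.Icc 1 T, x t * y t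

/-- The contrast value `C^b_{s,e}(x) = |⟨x, ϕ^b_{s,e}⟩|`. -/
noncomputable def contrastC (T s b e : ℕ) (x : ℕ → ℝ) : ℝ := |innerT T x (phiC s b e)|


section Aux

lemma core_low (u v : ℝ) (hu : 1 ≤ u) (huv : u ≤ v) :
    u^3 * ((u+v+1)*((u+v+1)^2-1)) ≤ 4*(u*(u+1)*(v*(v+1))*(2+u+v+2*u*v)) := by
  have hu0 : (0:ℝ) ≤ u := by linarith
  have hv0 : (0:ℝ) ≤ v := by linarith
  have h1 : u^2*(u+v+1) ≤ (u+1)*(2+u+v+2*u*v) := by nlinarith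
  have h2 : u*((u+v)*(u+v+2)) ≤ 4*(u*(v*(v+1))) := by
    nlinarith [mul_nonneg (mul_nonneg (sub_nonneg.mpr huv) (show (0:ℝ) ≤ 3*v+u+2 by linarith)) hu0]
  calc u^3*((u+v+1)*((u+v+1)^2-1)) = (u^2*(u+v+1))*(u*((u+v)*(u+v+2))) := by ring
    _ ≤ ((u+1)*(2+u+v+2*u*v))*(4*(u*(v*(v+1)))) := by
        apply mul_le_mul h1 h2
          (by nlinarith [mul_nonneg (mul_nonneg hu0 hv0) (show (0:ℝ) ≤ u+v+2 by linarith)])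
          (by nlinarith [mul_nonneg hu0 hv0])
    _ = 4*(u*(u+1)*(v*(v+1))*(2+u+v+2*u*v)) := by ring

lemma core_high (u v : ℝ) (hu : 1 ≤ u) (huv : u ≤ v) :
    u*(u+1)*(v*(v+1))*(2+u+v+2*u*v) ≤ 2*(u+1)^3*((u+v+1)*((u+v+1)^2-1)) := by
  have hv : 1 ≤ v := hu.trans huv
  have hu0 : (0:ℝ) ≤ u := by linarith
  have hv0 : (0:ℝ) ≤ v := by linarith
  have h1 : (u+1)*(2+u+v+2*u*v) ≤ (u+1)*(2*((u+1)*(u+v+2))) := by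
    apply mul_le_mul_of_nonneg_left (by nlinarith) (by linarith)
  have h2 : u*(v*(v+1)) ≤ (u+1)*((u+v)*(u+v+1)) := by
    nlinarith [mul_nonneg (mul_nonneg hu0 hu0) hv0, mul_nonneg (mul_nonneg hu0 hu0) hu0,
      mul_nonneg (mul_nonneg hu0 hv0) hv0, mul_nonneg hu0 hv0]
  calc u*(u+1)*(v*(v+1))*(2+u+v+2*u*v) = ((u+1)*(2+u+v+2*u*v))*(u*(v*(v+1))) := by ring
    _ ≤ ((u+1)*(2*((u+1)*(u+v+2))))*((u+1)*((u+v)*(u+v+1))) := by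
        apply mul_le_mul h1 h2 (mul_nonneg hu0 (mul_nonneg hv0 (by linarith)))
          (by nlinarith [mul_nonneg (mul_nonneg hu0 hu0) hu0, mul_nonneg hu0 hv0])
    _ = 2*(u+1)^3*((u+v+1)*((u+v+1)^2-1)) := by ring

lemma sum_Ioc_quad (a b : ℕ) (hab : a ≤ b) (c0 c1 c2 : ℝ) :
    ∑ t ∈ Ioc a b, (c0 + c1*(t:ℝ) + c2*(t:ℝ)^2)
      = (c0*((b:ℝ)+1) + c1*((b:ℝ)+1)*b/2 + c2*((b:ℝ)+1)*b*(2*b+1)/6)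
        - (c0*((a:ℝ)+1) + c1*((a:ℝ)+1)*a/2 + c2*((a:ℝ)+1)*a*(2*a+1)/6) := by
  induction b, hab using Nat.le_induction with
  | base => simp
  | succ n hn ih =>
      rw [Finset.sum_Ioc_succ_top (by omega), ih]
      push_cast
      ring

lemma phi_zero (s b e t : ℕ) (hsb : s < b) (hbe : b < e) (h : t < s ∨ e < t) :
    phiC s b e t = 0 := by
  unfold phiC
  rw [if_neg (by omega), if_neg (by omega)]

lemma split_sum (T s e : ℕ) (b : ℕ) (h1 : 1 ≤ s) (hsb : s ≤ b) (hbe : b ≤ e) (heT : e ≤ T)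
    (F : ℕ → ℝ) (hF : ∀ t, t < s ∨ e < t → F t = 0) :
    ∑ t ∈ Icc 1 T, F t = ∑ t ∈ Ioc (s-1) b, F t + ∑ t ∈ Ioc b e, F t := by
  have h0 : Icc 1 T = Ioc 0 T := by ext t; simp; omega
  rw [h0]
  rw [← Finset.sum_Ioc_consecutive F (by omega : 0 ≤ e) (by omega : e ≤ T)]
  rw [← Finset.sum_Ioc_consecutive F (by omega : 0 ≤ s-1) (by omega : s-1 ≤ e)]
  rw [← Finset.sum_Ioc_consecutive F (by omega : s-1 ≤ b) (by omega : b ≤ e)]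
  have z1 : ∑ t ∈ Ioc 0 (s-1), F t = 0 :=
    Finset.sum_eq_zero fun t ht => hF t (by simp at ht; omega)
  have z2 : ∑ t ∈ Ioc e T, F t = 0 :=
    Finset.sum_eq_zero fun t ht => hF t (by simp at ht; omega)
  rw [z1, z2]; ring

set_option maxHeartbeats 1000000 in
lemma norm_key (s b e num den D α β PL QR : ℝ)
    (hnum : num = (e-b+1)*(e-b)) (hden : den = (b-s+1)*(b-s))
    (hD : D = (e-s+1)*((e-s+1)^2-1)*(1+(e-b+1)*(b-s+1)+(e-b)*(b-s)))
    (hnum0 : num ≠ 0) (hden0 : den ≠ 0) (hD0 : D ≠ 0)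
    (hα2 : α^2 = 6/D) (hβ2 : β^2 = num/den)
    (hPL : PL = ((-(b*e+b*s-2*s^2+2*s))^2*((b:ℝ)+1)
        + (2*(e+2*b-3*s+2)*(-(b*e+b*s-2*s^2+2*s)))*((b:ℝ)+1)*b/2
        + (e+2*b-3*s+2)^2*((b:ℝ)+1)*b*(2*b+1)/6)
      - ((-(b*e+b*s-2*s^2+2*s))^2*((s-1)+1)
        + (2*(e+2*b-3*s+2)*(-(b*e+b*s-2*s^2+2*s)))*((s-1)+1)*(s-1)/2
        + (e+2*b-3*s+2)^2*((s-1)+1)*(s-1)*(2*(s-1)+1)/6))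
    (hQR : QR = ((2*e^2+2*e-b*e-b*s)^2*((e:ℝ)+1)
        + (-(2*(3*e-2*b-s+2)*(2*e^2+2*e-b*e-b*s)))*((e:ℝ)+1)*e/2
        + (3*e-2*b-s+2)^2*((e:ℝ)+1)*e*(2*e+1)/6)
      - ((2*e^2+2*e-b*e-b*s)^2*((b:ℝ)+1)
        + (-(2*(3*e-2*b-s+2)*(2*e^2+2*e-b*e-b*s)))*((b:ℝ)+1)*b/2
        + (3*e-2*b-s+2)^2*((b:ℝ)+1)*b*(2*b+1)/6)) :
    (α*β)^2*PL + (α/β)^2*QR = 1 := by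
  have key : 6*(num^2*PL + den^2*QR) = D*(num*den) := by
    subst hnum hden hD hPL hQR; ring
  have hβ0 : β^2 ≠ 0 := by rw [hβ2]; exact div_ne_zero hnum0 hden0
  have expand : (α*β)^2*PL + (α/β)^2*QR = α^2*β^2*PL + α^2/β^2*QR := by ring
  rw [expand, hα2, hβ2]
  have step : 6/D*(num/den)*PL + 6/D/(num/den)*QR = (6*(num^2*PL + den^2*QR))/(D*(num*den)) := by
    field_simp
  rw [step, key, div_self (by simp [hD0, hnum0, hden0])]

set_option maxHeartbeats 1000000 in
lemma orth_key (s b e A B num den α β OL OR : ℝ)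
    (hnum : num = (e-b+1)*(e-b)) (hden : den = (b-s+1)*(b-s))
    (hnum0 : num ≠ 0) (hden0 : den ≠ 0) (hα0 : α ≠ 0) (hβ0 : β ≠ 0)
    (hβ2 : β^2 = num/den)
    (hOL : OL = ((A*(-(b*e+b*s-2*s^2+2*s)))*((b:ℝ)+1)
        + (A*(e+2*b-3*s+2)+B*(-(b*e+b*s-2*s^2+2*s)))*((b:ℝ)+1)*b/2
        + (B*(e+2*b-3*s+2))*((b:ℝ)+1)*b*(2*b+1)/6)
      - ((A*(-(b*e+b*s-2*s^2+2*s)))*((s-1)+1)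
        + (A*(e+2*b-3*s+2)+B*(-(b*e+b*s-2*s^2+2*s)))*((s-1)+1)*(s-1)/2
        + (B*(e+2*b-3*s+2))*((s-1)+1)*(s-1)*(2*(s-1)+1)/6))
    (hOR : OR = ((A*(2*e^2+2*e-b*e-b*s))*((e:ℝ)+1)
        + (B*(2*e^2+2*e-b*e-b*s)-A*(3*e-2*b-s+2))*((e:ℝ)+1)*e/2
        + (-(B*(3*e-2*b-s+2)))*((e:ℝ)+1)*e*(2*e+1)/6)
      - ((A*(2*e^2+2*e-b*e-b*s))*((b:ℝ)+1)
        + (B*(2*e^2+2*e-b*e-b*s)-A*(3*e-2*b-s+2))*((b:ℝ)+1)*b/2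
        + (-(B*(3*e-2*b-s+2)))*((b:ℝ)+1)*b*(2*b+1)/6)) :
    (α*β)*OL + (α/β)*OR = 0 := by
  have key : num*OL + den*OR = 0 := by
    subst hnum hden hOL hOR; ring
  have h2 : β^2*OL + OR = 0 := by
    rw [hβ2]; field_simp; linear_combination key
  calc (α*β)*OL + (α/β)*OR = (α/β)*(β^2*OL + OR) := by field_simp
    _ = 0 := by rw [h2, mul_zero]

lemma phi_norm (T s b e : ℕ) (h1 : 1 ≤ s) (hsb : s < b) (hbe : b < e) (heT : e ≤ T) :
    ∑ t ∈ Icc 1 T, (phiC s b e t)^2 = 1 := by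
  have hb1 : (s:ℝ)+1 ≤ (b:ℝ) := by exact_mod_cast hsb
  have he1 : (b:ℝ)+1 ≤ (e:ℝ) := by exact_mod_cast hbe
  have hs1R : (1:ℝ) ≤ (s:ℝ) := by exact_mod_cast h1
  have hden : (0:ℝ) < ((b:ℝ)-s+1)*((b:ℝ)-s) := by nlinarith
  have hnum : (0:ℝ) < ((e:ℝ)-b+1)*((e:ℝ)-b) := by nlinarith
  have hD : (0:ℝ) < ((e:ℝ)-s+1)*(((e:ℝ)-s+1)^2-1)*(1+((e:ℝ)-b+1)*((b:ℝ)-s+1)+((e:ℝ)-b)*((b:ℝ)-s)) := by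
    have hn : (0:ℝ) < (e:ℝ)-s+1 := by linarith
    have hn2 : (0:ℝ) < ((e:ℝ)-s+1)^2-1 := by nlinarith
    have hN1 : (0:ℝ) < 1+((e:ℝ)-b+1)*((b:ℝ)-s+1)+((e:ℝ)-b)*((b:ℝ)-s) := by
      have p1 := mul_pos (show (0:ℝ) < (e:ℝ)-b+1 by linarith) (show (0:ℝ) < (b:ℝ)-s+1 by linarith)
      have p2 := mul_pos (show (0:ℝ) < (e:ℝ)-b by linarith) (show (0:ℝ) < (b:ℝ)-s by linarith)
      linarith
    exact mul_pos (mul_pos hn hn2) hN1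
  have hα2 : (alphaC s b e)^2
      = 6/(((e:ℝ)-s+1)*(((e:ℝ)-s+1)^2-1)*(1+((e:ℝ)-b+1)*((b:ℝ)-s+1)+((e:ℝ)-b)*((b:ℝ)-s))) :=
    Real.sq_sqrt (by positivity)
  have hβ2 : (betaC s b e)^2 = (((e:ℝ)-b+1)*((e:ℝ)-b))/(((b:ℝ)-s+1)*((b:ℝ)-s)) :=
    Real.sq_sqrt (by positivity)
  rw [split_sum T s e b h1 (le_of_lt hsb) (le_of_lt hbe) heT _
    (fun t ht => by rw [phi_zero s b e t hsb hbe ht]; simp)]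
  have hL : ∑ t ∈ Ioc (s-1) b, (phiC s b e t)^2
      = (alphaC s b e * betaC s b e)^2 * ∑ t ∈ Ioc (s-1) b,
        ((-((b:ℝ)*e+(b:ℝ)*s-2*(s:ℝ)^2+2*s))^2
         + (2*((e:ℝ)+2*b-3*s+2)*(-((b:ℝ)*e+(b:ℝ)*s-2*(s:ℝ)^2+2*s)))*(t:ℝ)
         + ((e:ℝ)+2*b-3*s+2)^2*(t:ℝ)^2) := by
    rw [Finset.mul_sum]
    refine Finset.sum_congr rfl fun t ht => ?_
    simp only [Finset.mem_Ioc] at ht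
    unfold phiC
    rw [if_pos ⟨by omega, ht.2⟩]
    ring
  have hR : ∑ t ∈ Ioc b e, (phiC s b e t)^2
      = (alphaC s b e / betaC s b e)^2 * ∑ t ∈ Ioc b e,
        ((2*(e:ℝ)^2+2*e-(b:ℝ)*e-(b:ℝ)*s)^2
         + (-(2*(3*(e:ℝ)-2*b-s+2)*(2*(e:ℝ)^2+2*e-(b:ℝ)*e-(b:ℝ)*s)))*(t:ℝ)
         + (3*(e:ℝ)-2*b-s+2)^2*(t:ℝ)^2) := by
    rw [Finset.mul_sum]
    refine Finset.sum_congr rfl fun t ht => ?_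
    simp only [Finset.mem_Ioc] at ht
    unfold phiC
    rw [if_neg (by omega), if_pos ⟨by omega, ht.2⟩]
    ring
  rw [hL, hR, sum_Ioc_quad (s-1) b (by omega), sum_Ioc_quad b e (by omega)]
  exact norm_key (s:ℝ) (b:ℝ) (e:ℝ) _ _ _ _ _ _ _ rfl rfl rfl
    (ne_of_gt hnum) (ne_of_gt hden) (ne_of_gt hD) hα2 hβ2
    (by rw [Nat.cast_sub h1]; push_cast; ring)
    (by push_cast; ring)

lemma phi_orth (T s b e : ℕ) (h1 : 1 ≤ s) (hsb : s < b) (hbe : b < e) (heT : e ≤ T) (A B : ℝ) :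
    ∑ t ∈ Icc 1 T, (A + B*(t:ℝ))*phiC s b e t = 0 := by
  have hb1 : (s:ℝ)+1 ≤ (b:ℝ) := by exact_mod_cast hsb
  have he1 : (b:ℝ)+1 ≤ (e:ℝ) := by exact_mod_cast hbe
  have hs1R : (1:ℝ) ≤ (s:ℝ) := by exact_mod_cast h1
  have hden : (0:ℝ) < ((b:ℝ)-s+1)*((b:ℝ)-s) := by nlinarith
  have hnum : (0:ℝ) < ((e:ℝ)-b+1)*((e:ℝ)-b) := by nlinarith
  have hD : (0:ℝ) < ((e:ℝ)-s+1)*(((e:ℝ)-s+1)^2-1)*(1+((e:ℝ)-b+1)*((b:ℝ)-s+1)+((e:ℝ)-b)*((b:ℝ)-s)) := by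
    have hn : (0:ℝ) < (e:ℝ)-s+1 := by linarith
    have hn2 : (0:ℝ) < ((e:ℝ)-s+1)^2-1 := by nlinarith
    have hN1 : (0:ℝ) < 1+((e:ℝ)-b+1)*((b:ℝ)-s+1)+((e:ℝ)-b)*((b:ℝ)-s) := by
      have p1 := mul_pos (show (0:ℝ) < (e:ℝ)-b+1 by linarith) (show (0:ℝ) < (b:ℝ)-s+1 by linarith)
      have p2 := mul_pos (show (0:ℝ) < (e:ℝ)-b by linarith) (show (0:ℝ) < (b:ℝ)-s by linarith)
      linarith
    exact mul_pos (mul_pos hn hn2) hN1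
  have hα : 0 < alphaC s b e := Real.sqrt_pos.mpr (by positivity)
  have hβ : 0 < betaC s b e := Real.sqrt_pos.mpr (by positivity)
  have hβ2 : (betaC s b e)^2 = (((e:ℝ)-b+1)*((e:ℝ)-b))/(((b:ℝ)-s+1)*((b:ℝ)-s)) :=
    Real.sq_sqrt (by positivity)
  rw [split_sum T s e b h1 (le_of_lt hsb) (le_of_lt hbe) heT _
    (fun t ht => by rw [phi_zero s b e t hsb hbe ht]; simp)]
  have hL : ∑ t ∈ Ioc (s-1) b, (A + B*(t:ℝ))*phiC s b e t
      = (alphaC s b e * betaC s b e) * ∑ t ∈ Ioc (s-1) b,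
        ((A*(-((b:ℝ)*e+(b:ℝ)*s-2*(s:ℝ)^2+2*s)))
         + (A*((e:ℝ)+2*b-3*s+2)+B*(-((b:ℝ)*e+(b:ℝ)*s-2*(s:ℝ)^2+2*s)))*(t:ℝ)
         + (B*((e:ℝ)+2*b-3*s+2))*(t:ℝ)^2) := by
    rw [Finset.mul_sum]
    refine Finset.sum_congr rfl fun t ht => ?_
    simp only [Finset.mem_Ioc] at ht
    unfold phiC
    rw [if_pos ⟨by omega, ht.2⟩]
    ring
  have hR : ∑ t ∈ Ioc b e, (A + B*(t:ℝ))*phiC s b e t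
      = (alphaC s b e / betaC s b e) * ∑ t ∈ Ioc b e,
        ((A*(2*(e:ℝ)^2+2*e-(b:ℝ)*e-(b:ℝ)*s))
         + (B*(2*(e:ℝ)^2+2*e-(b:ℝ)*e-(b:ℝ)*s)-A*(3*(e:ℝ)-2*b-s+2))*(t:ℝ)
         + (-(B*(3*(e:ℝ)-2*b-s+2)))*(t:ℝ)^2) := by
    rw [Finset.mul_sum]
    refine Finset.sum_congr rfl fun t ht => ?_
    simp only [Finset.mem_Ioc] at ht
    unfold phiC
    rw [if_neg (by omega), if_pos ⟨by omega, ht.2⟩]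
    ring
  rw [hL, hR, sum_Ioc_quad (s-1) b (by omega), sum_Ioc_quad b e (by omega)]
  exact orth_key (s:ℝ) (b:ℝ) (e:ℝ) A B _ _ _ _ _ _ rfl rfl
    (ne_of_gt hnum) (ne_of_gt hden) (ne_of_gt hα) (ne_of_gt hβ) hβ2
    (by rw [Nat.cast_sub h1]; push_cast; ring)
    (by push_cast; ring)

lemma Xsq_val (den num NN N1 α β X : ℝ) (hden : den ≠ 0) (hnum : num ≠ 0) (hNN : NN ≠ 0)
    (hN1 : N1 ≠ 0) (hα0 : α ≠ 0) (hβ0 : β ≠ 0)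
    (hα2 : α^2 = 6/(NN*N1)) (hβ2 : β^2 = num/den) (hX : X = den*(β/α)/NN) :
    X^2 = den*num*N1/(6*NN) := by
  have e4 : X^2 = den^2*(β^2/α^2)/NN^2 := by rw [hX]; ring
  have hα20 : α^2 ≠ 0 := pow_ne_zero 2 hα0
  rw [e4, hα2, hβ2]
  rw [hα2] at hα20
  field_simp at hα20 ⊢

end Aux

set_option maxHeartbeats 1000000

/-- for a continuous piecewise-linear signal with exactly one kink at `r` on
`[s, e]`, the contrast is maximized at `r` and is bounded between
`(1/√24)·η^{3/2}·Δ` and `(1/√3)·(η+1)^{3/2}·Δ`, where `η = min{r − s, e − r}`. -/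
theorem statement11 (T s r e : ℕ) (hs : 1 ≤ s) (hsr : s < r) (hre : r < e) (heT : e ≤ T)
    (f : ℕ → ℝ) (a₁ b₁ a₂ b₂ Δ : ℝ) (hslope : b₁ ≠ b₂)
    (hcont : a₁ + b₁ * r = a₂ + b₂ * r)
    (hf₁ : ∀ t, s ≤ t → t ≤ r → f t = a₁ + b₁ * t)
    (hf₂ : ∀ t, r ≤ t → t ≤ e → f t = a₂ + b₂ * t)
    (hΔ : Δ = |b₁ - b₂|) :
    (∀ b, s < b → b < e → contrastC T s b e f ≤ contrastC T s r e f) ∧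
    (1 / Real.sqrt 24) * (min ((r : ℝ) - s) ((e : ℝ) - r)) ^ ((3 : ℝ) / 2) * Δ ≤
        contrastC T s r e f ∧
    contrastC T s r e f ≤
        (1 / Real.sqrt 3) * (min ((r : ℝ) - s) ((e : ℝ) - r) + 1) ^ ((3 : ℝ) / 2) * Δ := by
  -- basic cast facts
  have hu1 : (1:ℝ) ≤ (r:ℝ)-s := by
    have : (s:ℝ)+1 ≤ (r:ℝ) := by exact_mod_cast hsr
    linarith
  have hv1 : (1:ℝ) ≤ (e:ℝ)-r := by
    have : (r:ℝ)+1 ≤ (e:ℝ) := by exact_mod_cast hre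
    linarith
  have hs1R : (1:ℝ) ≤ (s:ℝ) := by exact_mod_cast hs
  have hden : (0:ℝ) < ((r:ℝ)-s+1)*((r:ℝ)-s) := by nlinarith
  have hnum : (0:ℝ) < ((e:ℝ)-r+1)*((e:ℝ)-r) := by nlinarith
  have hN1 : (0:ℝ) < 1+((e:ℝ)-r+1)*((r:ℝ)-s+1)+((e:ℝ)-r)*((r:ℝ)-s) := by nlinarith
  have hNN : (0:ℝ) < ((e:ℝ)-s+1)*(((e:ℝ)-s+1)^2-1) := by nlinarith
  have hD : (0:ℝ) < ((e:ℝ)-s+1)*(((e:ℝ)-s+1)^2-1)*(1+((e:ℝ)-r+1)*((r:ℝ)-s+1)+((e:ℝ)-r)*((r:ℝ)-s)) :=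
    mul_pos hNN hN1
  have hα : 0 < alphaC s r e := Real.sqrt_pos.mpr (div_pos (by norm_num) hD)
  have hβ : 0 < betaC s r e := Real.sqrt_pos.mpr (div_pos hnum hden)
  have hα2 : (alphaC s r e)^2
      = 6/(((e:ℝ)-s+1)*(((e:ℝ)-s+1)^2-1)*(1+((e:ℝ)-r+1)*((r:ℝ)-s+1)+((e:ℝ)-r)*((r:ℝ)-s))) :=
    Real.sq_sqrt (le_of_lt (div_pos (by norm_num) hD))
  have hβ2 : (betaC s r e)^2 = (((e:ℝ)-r+1)*((e:ℝ)-r))/(((r:ℝ)-s+1)*((r:ℝ)-s)) :=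
    Real.sq_sqrt (le_of_lt (div_pos hnum hden))
  -- opaque constants with defining equations
  obtain ⟨μ, hμ⟩ : ∃ x : ℝ, x = (b₁-b₂)/(((e:ℝ)-s+1)*(((e:ℝ)-s+1)^2-1)) := ⟨_, rfl⟩
  obtain ⟨A, hA⟩ : ∃ x : ℝ, x = a₁ + μ*(((e:ℝ)-r+1)*((e:ℝ)-r))*((r:ℝ)*e+(r:ℝ)*s-2*(s:ℝ)^2+2*s) := ⟨_, rfl⟩
  obtain ⟨B, hB⟩ : ∃ x : ℝ, x = b₁ - μ*(((e:ℝ)-r+1)*((e:ℝ)-r))*((e:ℝ)+2*r-3*s+2) := ⟨_, rfl⟩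
  obtain ⟨c, hc⟩ : ∃ x : ℝ, x = μ*(((r:ℝ)-s+1)*((r:ℝ)-s))*(betaC s r e/alphaC s r e) := ⟨_, rfl⟩
  have hμNN : μ*(((e:ℝ)-s+1)*(((e:ℝ)-s+1)^2-1)) = b₁-b₂ := by
    rw [hμ]; field_simp
    exact div_self (ne_of_gt hNN)
  have hcab : c*(alphaC s r e*betaC s r e) = μ*(((e:ℝ)-r+1)*((e:ℝ)-r)) := by
    have e1 : c*(alphaC s r e*betaC s r e) = μ*(((r:ℝ)-s+1)*((r:ℝ)-s))*(betaC s r e)^2 := by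
      rw [hc]; field_simp
    rw [e1, hβ2]; field_simp
  have hcab2 : c*(alphaC s r e/betaC s r e) = μ*(((r:ℝ)-s+1)*((r:ℝ)-s)) := by
    rw [hc]; field_simp
  -- pointwise decomposition of f on [s,e]
  have hpoint : ∀ t : ℕ, s ≤ t → t ≤ e → f t = c * phiC s r e t + (A + B*(t:ℝ)) := by
    intro t h1t h2t
    by_cases htr : t ≤ r
    · rw [hf₁ t h1t htr]
      unfold phiC
      rw [if_pos ⟨h1t, htr⟩, ← mul_assoc, hcab, hA, hB]
      ring
    · have hrt : r + 1 ≤ t := by omega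
      rw [hf₂ t (by omega) h2t]
      unfold phiC
      rw [if_neg (by omega), if_pos ⟨hrt, h2t⟩, hA, hB]
      linear_combination ((3*(e:ℝ)-2*r-s+2)*(t:ℝ) - (2*(e:ℝ)^2+2*(e:ℝ)-(r:ℝ)*e-(r:ℝ)*s))*hcab2 + ((t:ℝ)-(r:ℝ))*hμNN - hcont
  -- inner product decomposition
  have hdecomp : ∀ b, s < b → b < e →
      innerT T f (phiC s b e) = ∑ t ∈ Icc 1 T, (c * phiC s r e t) * phiC s b e t := by
    intro b hsb hbe
    unfold innerT
    have hcongr : ∀ t ∈ Icc 1 T, f t * phiC s b e t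
        = (c * phiC s r e t) * phiC s b e t + (A + B*(t:ℝ))*phiC s b e t := by
      intro t ht
      by_cases hse : s ≤ t ∧ t ≤ e
      · rw [hpoint t hse.1 hse.2]; ring
      · rw [phi_zero s b e t hsb hbe (by omega)]; ring
    rw [Finset.sum_congr rfl hcongr, Finset.sum_add_distrib,
      phi_orth T s b e hs hsb hbe heT A B, add_zero]
  -- value at r
  have hval : innerT T f (phiC s r e) = c := by
    rw [hdecomp r hsr hre]
    have : ∀ t ∈ Icc 1 T, (c * phiC s r e t) * phiC s r e t = c * (phiC s r e t)^2 := by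
      intro t _; ring
    rw [Finset.sum_congr rfl this, ← Finset.mul_sum, phi_norm T s r e hs hsr hre heT, mul_one]
  have hcontr_r : contrastC T s r e f = |c| := by
    unfold contrastC; rw [hval]
  -- maximization
  have hmax : ∀ b, s < b → b < e → contrastC T s b e f ≤ contrastC T s r e f := by
    intro b hsb hbe
    rw [hcontr_r]
    unfold contrastC
    rw [hdecomp b hsb hbe]
    have hCS := Finset.sum_mul_sq_le_sq_mul_sq (Icc 1 T) (fun t => c * phiC s r e t) (phiC s b e)
    have hg2 : ∑ t ∈ Icc 1 T, (c * phiC s r e t)^2 = c^2 := by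
      have : ∀ t ∈ Icc 1 T, (c * phiC s r e t)^2 = c^2 * (phiC s r e t)^2 := by
        intro t _; ring
      rw [Finset.sum_congr rfl this, ← Finset.mul_sum, phi_norm T s r e hs hsr hre heT, mul_one]
    rw [hg2, phi_norm T s b e hs hsb hbe heT, mul_one] at hCS
    have h1 : |∑ t ∈ Icc 1 T, (c * phiC s r e t) * phiC s b e t|
        = Real.sqrt ((∑ t ∈ Icc 1 T, (c * phiC s r e t) * phiC s b e t)^2) :=
      (Real.sqrt_sq_eq_abs _).symm
    rw [h1, show |c| = Real.sqrt (c^2) from (Real.sqrt_sq_eq_abs c).symm]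
    exact Real.sqrt_le_sqrt hCS
  -- closed form for |c|
  obtain ⟨X, hX⟩ : ∃ x : ℝ, x = (((r:ℝ)-s+1)*((r:ℝ)-s))*(betaC s r e/alphaC s r e)/(((e:ℝ)-s+1)*(((e:ℝ)-s+1)^2-1)) := ⟨_, rfl⟩
  have hXpos : 0 < X := by
    rw [hX]; exact div_pos (mul_pos hden (div_pos hβ hα)) hNN
  have hcX : |c| = Δ * X := by
    have e3 : c = (b₁-b₂)*X := by rw [hc, hμ, hX]; ring
    rw [e3, abs_mul, abs_of_pos hXpos, hΔ]
  have hX2 := Xsq_val (((r:ℝ)-s+1)*((r:ℝ)-s)) (((e:ℝ)-r+1)*((e:ℝ)-r))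
    (((e:ℝ)-s+1)*(((e:ℝ)-s+1)^2-1)) (1+((e:ℝ)-r+1)*((r:ℝ)-s+1)+((e:ℝ)-r)*((r:ℝ)-s))
    (alphaC s r e) (betaC s r e) X (ne_of_gt hden) (ne_of_gt hnum) (ne_of_gt hNN)
    (ne_of_gt hN1) (ne_of_gt hα) (ne_of_gt hβ) hα2 hβ2 hX
  have hΔ0 : 0 ≤ Δ := by rw [hΔ]; exact abs_nonneg _
  have hmin1 : (1:ℝ) ≤ min ((r:ℝ)-s) ((e:ℝ)-r) := le_min hu1 hv1
  have hmin0 : (0:ℝ) ≤ min ((r:ℝ)-s) ((e:ℝ)-r) := by linarith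
  have h6NN : (0:ℝ) < 6*(((e:ℝ)-s+1)*(((e:ℝ)-s+1)^2-1)) := by linarith
  have hrp : ∀ x : ℝ, 0 ≤ x → (x^((3:ℝ)/2))^2 = x^3 := by
    intro x hx
    rw [← Real.rpow_natCast (x^((3:ℝ)/2)) 2, ← Real.rpow_mul hx]
    norm_num
  refine ⟨hmax, ?_, ?_⟩
  · -- lower bound
    have h24 : ((1/Real.sqrt 24))^2 = 1/24 := by
      rw [div_pow, one_pow, Real.sq_sqrt]; norm_num
    have hsq : ((1/Real.sqrt 24)*(min ((r:ℝ)-s) ((e:ℝ)-r))^((3:ℝ)/2))^2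
        = (min ((r:ℝ)-s) ((e:ℝ)-r))^3/24 := by
      rw [mul_pow, h24, hrp _ hmin0]; ring
    have hsqle : ((1/Real.sqrt 24)*(min ((r:ℝ)-s) ((e:ℝ)-r))^((3:ℝ)/2))^2 ≤ X^2 := by
      rw [hsq, hX2, div_le_div_iff₀ (by norm_num) h6NN]
      rcases le_total ((r:ℝ)-s) ((e:ℝ)-r) with h | h
      · rw [min_eq_left h]
        linarith [core_low ((r:ℝ)-s) ((e:ℝ)-r) hu1 h]
      · rw [min_eq_right h]
        linarith [core_low ((e:ℝ)-r) ((r:ℝ)-s) hv1 h]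
    have hL0 : 0 ≤ (1/Real.sqrt 24)*(min ((r:ℝ)-s) ((e:ℝ)-r))^((3:ℝ)/2) := by positivity
    have hle : (1/Real.sqrt 24)*(min ((r:ℝ)-s) ((e:ℝ)-r))^((3:ℝ)/2) ≤ X := by
      have := Real.sqrt_le_sqrt hsqle
      rwa [Real.sqrt_sq hL0, Real.sqrt_sq (le_of_lt hXpos)] at this
    rw [hcontr_r, hcX]
    calc (1/Real.sqrt 24)*(min ((r:ℝ)-s) ((e:ℝ)-r))^((3:ℝ)/2)*Δ
        ≤ X*Δ := mul_le_mul_of_nonneg_right hle hΔ0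
      _ = Δ*X := by ring
  · -- upper bound
    have h3 : ((1/Real.sqrt 3))^2 = 1/3 := by
      rw [div_pow, one_pow, Real.sq_sqrt]; norm_num
    have hsq : ((1/Real.sqrt 3)*(min ((r:ℝ)-s) ((e:ℝ)-r)+1)^((3:ℝ)/2))^2
        = (min ((r:ℝ)-s) ((e:ℝ)-r)+1)^3/3 := by
      rw [mul_pow, h3, hrp _ (by linarith)]; ring
    have hsqle : X^2 ≤ ((1/Real.sqrt 3)*(min ((r:ℝ)-s) ((e:ℝ)-r)+1)^((3:ℝ)/2))^2 := by
      rw [hsq, hX2, div_le_div_iff₀ h6NN (by norm_num)]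
      rcases le_total ((r:ℝ)-s) ((e:ℝ)-r) with h | h
      · rw [min_eq_left h]
        linarith [core_high ((r:ℝ)-s) ((e:ℝ)-r) hu1 h]
      · rw [min_eq_right h]
        linarith [core_high ((e:ℝ)-r) ((r:ℝ)-s) hv1 h]
    have hU0 : 0 ≤ (1/Real.sqrt 3)*(min ((r:ℝ)-s) ((e:ℝ)-r)+1)^((3:ℝ)/2) := by positivity
    have hle : X ≤ (1/Real.sqrt 3)*(min ((r:ℝ)-s) ((e:ℝ)-r)+1)^((3:ℝ)/2) := by
      have := Real.sqrt_le_sqrt hsqle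
      rwa [Real.sqrt_sq hU0, Real.sqrt_sq (le_of_lt hXpos)] at this
    rw [hcontr_r, hcX]
    calc Δ*X = X*Δ := by ring
      _ ≤ (1/Real.sqrt 3)*(min ((r:ℝ)-s) ((e:ℝ)-r)+1)^((3:ℝ)/2)*Δ :=
          mul_le_mul_of_nonneg_right hle hΔ0
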